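/- Let L be an even lattice of signature (2,n), let D be the exponent of the finite abelian group A_L = L^∨/L, and let r ∈ L be a primitive vector with (r,r) < 0 such that −σ_r maps L into itself and lies in the stable orthogonal group Õ(L). Then either (r,r) = −2D and div(r) = D with D odd, or (r,r) = −D and div(r) = D or div(r) = D/2. -/

import Mathlib

/-- The dual lattice `L^∨ = {y ∈ L ⊗ ℚ : (y,l) ∈ ℤ for all l ∈ L}`, viewed inside the
ambient rational vector space `V` (which plays the role of `L ⊗ ℚ`). -/
def DualSet {V : Type} [AddCommGroup V] [Module ℚ V]
    (B : V →ₗ[ℚ] V →ₗ[ℚ] ℚ) (L : Submodule ℤ V) : Set V :=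
  {y : V | ∀ l ∈ L, ∃ a : ℤ, B y l = (a : ℚ)}

/-- `L` is a (full, integral, nondegenerate, symmetric) lattice in the rational vector
space `V` with respect to the bilinear form `B`:  it is finitely generated, spans `V`
over `ℚ`, the form is symmetric, nondegenerate, and `ℤ`-valued on `L`. -/
def IsIntLattice {V : Type} [AddCommGroup V] [Module ℚ V]
    (B : V →ₗ[ℚ] V →ₗ[ℚ] ℚ) (L : Submodule ℤ V) : Prop :=
  L.FG ∧ Submodule.span ℚ (L : Set V) = ⊤ ∧
    (∀ x y : V, B x y = B y x) ∧
    (∀ x : V, (∀ y : V, B x y = 0) → x = 0) ∧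
    (∀ x ∈ L, ∀ y ∈ L, ∃ a : ℤ, B x y = (a : ℚ))

/-- The lattice is even: `(x,x) ∈ 2ℤ` for all `x ∈ L`. -/
def IsEvenLat {V : Type} [AddCommGroup V] [Module ℚ V]
    (B : V →ₗ[ℚ] V →ₗ[ℚ] ℚ) (L : Submodule ℤ V) : Prop :=
  ∀ x ∈ L, ∃ a : ℤ, B x x = 2 * (a : ℚ)

/-- The form `B` has signature `(2,n)`: it diagonalizes with exactly `2` positive and
`n` negative diagonal entries. -/
def HasSignatureTwo {V : Type} [AddCommGroup V] [Module ℚ V]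
    (B : V →ₗ[ℚ] V →ₗ[ℚ] ℚ) (n : ℕ) : Prop :=
  ∃ b : Module.Basis (Fin (2 + n)) ℚ V,
    (∀ i j, i ≠ j → B (b i) (b j) = 0) ∧
    Nat.card {i : Fin (2 + n) // 0 < B (b i) (b i)} = 2 ∧
    Nat.card {i : Fin (2 + n) // B (b i) (b i) < 0} = n

/-- `r` is a primitive vector of `L`: `ℚr ∩ L = ℤr`. -/
def IsPrimitiveVec {V : Type} [AddCommGroup V] [Module ℚ V]
    (L : Submodule ℤ V) (r : V) : Prop :=
  r ∈ L ∧ ∀ x ∈ L, (∃ q : ℚ, x = q • r) → ∃ a : ℤ, x = a • r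

/-- The reflection `σ_r : l ↦ l − (2(l,r)/(r,r))·r` on `V = L ⊗ ℚ`. -/
def reflVec {V : Type} [AddCommGroup V] [Module ℚ V]
    (B : V →ₗ[ℚ] V →ₗ[ℚ] ℚ) (r : V) (l : V) : V :=
  l - (2 * B l r / B r r) • r

/-- `s` is the divisor `div(r)` of `r`: the positive generator of the ideal
`{(r,l) : l ∈ L} ⊆ ℤ`. -/
def IsDivOf {V : Type} [AddCommGroup V] [Module ℚ V]
    (B : V →ₗ[ℚ] V →ₗ[ℚ] ℚ) (L : Submodule ℤ V) (r : V) (s : ℤ) : Prop :=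
  0 < s ∧ (∀ l ∈ L, ∃ a : ℤ, B r l = ((s * a : ℤ) : ℚ)) ∧ ∃ l ∈ L, B r l = (s : ℚ)

/-- `D` is the exponent of the (finite abelian) discriminant group `A_L = L^∨/L`:
the smallest positive integer annihilating `L^∨/L` (characterized by dividing every
positive annihilator). -/
def IsExponentOf {V : Type} [AddCommGroup V] [Module ℚ V]
    (B : V →ₗ[ℚ] V →ₗ[ℚ] ℚ) (L : Submodule ℤ V) (D : ℤ) : Prop :=
  0 < D ∧ (∀ y ∈ DualSet B L, D • y ∈ L) ∧
    ∀ D' : ℤ, 0 < D' → (∀ y ∈ DualSet B L, D' • y ∈ L) → D ∣ D'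

section Aux

variable {V : Type} [AddCommGroup V] [Module ℚ V]

lemma dualSet_neg (B : V →ₗ[ℚ] V →ₗ[ℚ] ℚ) (L : Submodule ℤ V) {y : V}
    (hy : y ∈ DualSet B L) : -y ∈ DualSet B L := fun l hl => by
  obtain ⟨a, ha⟩ := hy l hl
  exact ⟨-a, by simp [ha]⟩

/-- For a primitive vector `r` in a nondegenerate integral lattice there is a dual
vector pairing to `1` with it. -/
lemma exists_dual_pairing_one
    (B : V →ₗ[ℚ] V →ₗ[ℚ] ℚ) (L : Submodule ℤ V)
    (hlat : IsIntLattice B L) (r : V) (hprim : IsPrimitiveVec L r) (hr0 : r ≠ 0) :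
    ∃ y ∈ DualSet B L, B y r = 1 := by
  classical
  obtain ⟨hfg, hspanQ, hsymm, hnd, hint⟩ := hlat
  haveI : Module.Finite ℤ L := Module.Finite.iff_fg.mpr hfg
  haveI : IsAddTorsionFree V := IsAddTorsionFree.of_module_rat V
  haveI : Module.Free ℤ L := Module.free_of_finite_type_torsion_free'
  set ι := Module.Free.ChooseBasisIndex ℤ L with hι
  let b : Module.Basis ι ℤ L := Module.Free.chooseBasis ℤ L
  let v : ι → V := fun i => (b i : V)
  have hv_mem : ∀ i, v i ∈ L := fun i => (b i).2
  have hindZ : LinearIndependent ℤ v := b.linearIndependent.map' L.subtype L.ker_subtype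
  have hindQ : LinearIndependent ℚ v := (LinearIndependent.iff_fractionRing ℤ ℚ).mp hindZ
  -- the ℤ-span of v is L
  have hspanZ : Submodule.span ℤ (Set.range v) = L := by
    have : Submodule.map L.subtype (Submodule.span ℤ (Set.range b)) =
        Submodule.span ℤ (Set.range v) := by
      rw [Submodule.map_span]
      congr 1
      ext x
      simp [v, Set.range_comp]
    rw [b.span_eq, Submodule.map_top, Submodule.range_subtype] at this
    exact this.symm
  have hspanV : ⊤ ≤ Submodule.span ℚ (Set.range v) := by
    rw [← hspanQ]
    apply Submodule.span_le.mpr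
    intro x hx
    have hx' : x ∈ Submodule.span ℤ (Set.range v) := hspanZ ▸ hx
    have : Submodule.span ℤ (Set.range v) ≤
        Submodule.restrictScalars ℤ (Submodule.span ℚ (Set.range v)) :=
      Submodule.span_le.mpr (Submodule.subset_span (R := ℚ))
    exact this hx'
  let e : Module.Basis ι ℚ V := Module.Basis.mk hindQ hspanV
  have he : ∀ i, e i = v i := fun i => by simp [e]
  haveI : FiniteDimensional ℚ V := Module.Finite.of_basis e
  have hB : LinearMap.BilinForm.Nondegenerate B :=
    ⟨hnd, fun y hy => hnd y (fun x => by rw [hsymm]; exact hy x)⟩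
  let f : Module.Basis ι ℚ V := LinearMap.BilinForm.dualBasis B hB e
  have hfe : ∀ i j, B (f i) (v j) = if j = i then 1 else 0 := fun i j => by
    rw [← he j]
    exact LinearMap.BilinForm.apply_dualBasis_left (B := B) hB e i j
  -- f j lies in the dual set
  have hfdual : ∀ j, f j ∈ DualSet B L := by
    intro j l hl
    have hl' : l ∈ Submodule.span ℤ (Set.range v) := hspanZ ▸ hl
    clear hl
    induction hl' using Submodule.span_induction with
    | mem x hx =>
        obtain ⟨i, rfl⟩ := hx
        exact ⟨if i = j then 1 else 0, by rw [hfe]; split <;> simp⟩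
    | zero => exact ⟨0, by simp⟩
    | add x y _ _ hx hy =>
        obtain ⟨a, ha⟩ := hx; obtain ⟨c, hc⟩ := hy
        exact ⟨a + c, by rw [map_add, ha, hc]; push_cast; ring⟩
    | smul n x _ hx =>
        obtain ⟨a, ha⟩ := hx
        exact ⟨n * a, by rw [map_zsmul, ha]; push_cast; simp [zsmul_eq_mul]⟩
  -- integer coordinates of r
  have hrL : r ∈ L := hprim.1
  let c : ι → ℤ := fun i => b.repr ⟨r, hrL⟩ i
  have hr_sum : r = ∑ i, c i • v i := by
    have h2 := congrArg (Subtype.val) (b.sum_repr ⟨r, hrL⟩)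
    simp only [AddSubmonoidClass.coe_finset_sum, SetLike.val_smul] at h2
    exact h2.symm
  have hc : ∀ j, B (f j) r = (c j : ℚ) := by
    intro j
    rw [hr_sum, map_sum]
    have : ∀ i, B (f j) (c i • v i) = (c i : ℚ) * (if i = j then 1 else 0) := by
      intro i
      rw [map_zsmul, hfe]
      simp [zsmul_eq_mul]
    simp only [this]
    simp
  -- the value subgroup
  let H : AddSubgroup ℤ :=
    { carrier := {t : ℤ | ∃ y ∈ DualSet B L, B y r = (t : ℚ)}
      zero_mem' := ⟨0, fun l _ => ⟨0, by simp⟩, by simp⟩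
      add_mem' := by
        rintro t u ⟨y, hy, hyt⟩ ⟨z, hz, hzt⟩
        refine ⟨y + z, fun l hl => ?_, by rw [map_add]; push_cast; simp [hyt, hzt]⟩
        obtain ⟨a, ha⟩ := hy l hl; obtain ⟨d, hd⟩ := hz l hl
        exact ⟨a + d, by rw [map_add]; push_cast; simp [ha, hd]⟩
      neg_mem' := by
        rintro t ⟨y, hy, hyt⟩
        exact ⟨-y, dualSet_neg B L hy, by rw [map_neg]; push_cast; simp [hyt]⟩ }
  obtain ⟨a, ha⟩ := Int.subgroup_cyclic H
  have hcH : ∀ j, c j ∈ H := fun j => ⟨f j, hfdual j, hc j⟩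
  have hdvd : ∀ j, a ∣ c j := by
    intro j
    have := hcH j
    rw [ha, AddSubgroup.mem_closure_singleton] at this
    obtain ⟨n, hn⟩ := this
    exact ⟨n, by rw [← hn, smul_eq_mul]; ring⟩
  have ha0 : a ≠ 0 := by
    rintro rfl
    have : ∀ j, c j = 0 := fun j => by simpa using hdvd j
    apply hr0
    rw [hr_sum]
    simp [this]
  -- build w with a • w = r
  let w : V := ∑ i, (c i / a) • v i
  have hwL : w ∈ L := Submodule.sum_mem L fun i _ => L.smul_mem _ (hv_mem i)
  have haw : a • w = r := by
    rw [hr_sum, Finset.smul_sum]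
    congr 1
    ext i
    rw [smul_smul]
    congr 1
    exact Int.mul_ediv_cancel' (hdvd i)
  have hwq : w = (a : ℚ)⁻¹ • r := by
    have haQ : (a : ℚ) ≠ 0 := Int.cast_ne_zero.mpr ha0
    rw [← haw, ← Int.cast_smul_eq_zsmul ℚ a w, smul_smul, inv_mul_cancel₀ haQ, one_smul]
  obtain ⟨k, hk⟩ := hprim.2 w hwL ⟨(a : ℚ)⁻¹, hwq⟩
  have hak : a * k = 1 := by
    have h1 : r = (a * k) • r := by
      rw [mul_smul, ← hk, haw]
    have h2 : ((1 : ℤ) - a * k) • r = 0 := by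
      rw [sub_smul, one_smul, ← h1, sub_self]
    rcases smul_eq_zero.mp h2 with h | h
    · omega
    · exact absurd h hr0
  have haH : a ∈ H := by
    rw [ha]
    exact AddSubgroup.subset_closure (Set.mem_singleton a)
  obtain ⟨y, hy, hyv⟩ := haH
  rcases Int.isUnit_iff.mp (IsUnit.of_mul_eq_one (a := a) k hak) with h1 | h1
  · exact ⟨y, hy, by rw [hyv, h1]; norm_num⟩
  · refine ⟨-y, dualSet_neg B L hy, ?_⟩
    rw [map_neg, LinearMap.neg_apply, hyv, h1]
    norm_num

end Aux

/-- Let `L` be an even lattice of signature `(2,n)`, `D` the exponent of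
`A_L = L^∨/L`, and `r ∈ L` a primitive vector with `(r,r) < 0` such that `−σ_r` maps `L`
into itself and lies in `Õ(L)`.  Then either `(r,r) = −2D` and `div(r) = D` with `D` odd,
or `(r,r) = −D` and `div(r) = D` or `div(r) = D/2`. -/
theorem minus_reflection_in_stable_orthogonal_group
    {V : Type} [AddCommGroup V] [Module ℚ V]
    (B : V →ₗ[ℚ] V →ₗ[ℚ] ℚ) (L : Submodule ℤ V) (n : ℕ)
    (hlat : IsIntLattice B L) (heven : IsEvenLat B L) (hsig : HasSignatureTwo B n)
    (D : ℤ) (hD : IsExponentOf B L D)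
    (r : V) (hprim : IsPrimitiveVec L r) (hneg : B r r < 0)
    (s : ℤ) (hs : IsDivOf B L r s)
    (hmap : ∀ l ∈ L, -(reflVec B r l) ∈ L)
    (hstab : ∀ y ∈ DualSet B L, -(reflVec B r y) - y ∈ L) :
    (B r r = ((-2 * D : ℤ) : ℚ) ∧ s = D ∧ Odd D) ∨
    (B r r = ((-D : ℤ) : ℚ) ∧ (s = D ∨ 2 * s = D)) := by
  obtain ⟨hfg, hspanQ, hsymm, hnd, hint⟩ := id hlat
  have hrL : r ∈ L := hprim.1
  have hr0 : r ≠ 0 := by rintro rfl; simp at hneg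
  have hBrr_ne : B r r ≠ 0 := ne_of_lt hneg
  -- the lattice is even at r : B r r = -(2m) with m > 0
  obtain ⟨a0, ha0⟩ := heven r hrL
  have ha0neg : a0 < 0 := by
    have : 2 * (a0 : ℚ) < 0 := ha0 ▸ hneg
    have : (a0 : ℚ) < 0 := by linarith
    exact_mod_cast this
  set m : ℤ := -a0 with hm
  have hmpos : 0 < m := by omega
  have hmQ : (m : ℚ) ≠ 0 := by exact_mod_cast hmpos.ne'
  have hBrr : B r r = -(2 * (m : ℚ)) := by rw [ha0]; push_cast [hm]; ring
  -- scalar injectivity and primitivity in ℚ-form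
  have hsmul_inj : ∀ q1 q2 : ℚ, q1 • r = q2 • r → q1 = q2 := fun q1 q2 h =>
    smul_left_injective ℚ hr0 h
  have hprimQ : ∀ q : ℚ, q • r ∈ L → ∃ k : ℤ, q = k := by
    intro q hq
    obtain ⟨k, hk⟩ := hprim.2 _ hq ⟨q, rfl⟩
    refine ⟨k, hsmul_inj _ _ ?_⟩
    rw [hk]
    exact (Int.cast_smul_eq_zsmul ℚ k r).symm
  have hsmulQ : ∀ (k : ℤ) (x : V), x ∈ L → (k : ℚ) • x ∈ L := fun k x hx => by
    rw [Int.cast_smul_eq_zsmul]; exact L.smul_mem k hx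
  have hhalf : ¬ ((2 : ℚ)⁻¹ • r ∈ L) := by
    intro h
    obtain ⟨k, hk⟩ := hprimQ _ h
    have : (2 * k : ℤ) = 1 := by
      have : (2 : ℚ) * k = 1 := by rw [← hk]; norm_num
      exact_mod_cast this
    omega
  have hrefl_neg : ∀ l : V, -(reflVec B r l) = (2 * B l r / B r r) • r - l := fun l => by
    rw [reflVec, neg_sub]
  -- m divides (r, l) for every l ∈ L
  have hdvd_m : ∀ l ∈ L, ∃ k : ℤ, B r l = ((m * k : ℤ) : ℚ) := by
    intro l hl
    have h1 : -(reflVec B r l) + l ∈ L := L.add_mem (hmap l hl) hl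
    rw [hrefl_neg l] at h1
    have h1' : (2 * B l r / B r r) • r ∈ L := by simpa using h1
    obtain ⟨k', hk'⟩ := hprimQ _ h1'
    refine ⟨-k', ?_⟩
    have h2 : 2 * B l r = (k' : ℚ) * B r r := (div_eq_iff hBrr_ne).mp hk'
    rw [hBrr] at h2
    rw [hsymm r l]
    push_cast
    linear_combination h2 / 2
  -- m ∣ s and s ∣ 2m
  obtain ⟨l0, hl0L, hl0⟩ := hs.2.2
  obtain ⟨k0, hk0⟩ := hdvd_m l0 hl0L
  have hms : m ∣ s := ⟨k0, by exact_mod_cast (hk0.symm.trans hl0).symm⟩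
  obtain ⟨a1, ha1⟩ := hs.2.1 r hrL
  have hs2m : s ∣ 2 * m := by
    have h : ((s * a1 : ℤ) : ℚ) = -(2 * (m : ℚ)) := ha1.symm.trans hBrr
    have h' : s * a1 = -(2 * m) := by exact_mod_cast h
    exact ⟨-a1, by rw [mul_neg]; linarith⟩
  -- r/m is in the dual set
  have hdual_rm : (m : ℚ)⁻¹ • r ∈ DualSet B L := by
    intro l hl
    obtain ⟨k, hk⟩ := hdvd_m l hl
    refine ⟨k, ?_⟩
    have h1 : B ((m : ℚ)⁻¹ • r) l = (m : ℚ)⁻¹ * B r l := by simp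
    rw [h1, hk]
    push_cast
    field_simp
  -- (2m) annihilates the discriminant group
  have h2m : ∀ y ∈ DualSet B L, (2 * m) • y ∈ L := by
    intro y hy
    have hw := hstab y hy
    rw [hrefl_neg y] at hw
    obtain ⟨t, ht⟩ := hy r hrL
    have hcoef : 2 * B y r / B r r = (-t : ℚ) / m := by
      rw [ht, hBrr]; field_simp
    rw [hcoef] at hw
    set z : V := ((-t : ℚ) / m) • r - y - y with hz
    have key : ((2 * m : ℤ) : ℚ) • y = -((m : ℚ) • z) + ((-t : ℤ) : ℚ) • r := by
      rw [hz]
      push_cast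
      match_scalars
      · ring
      · field_simp; ring
    rw [← Int.cast_smul_eq_zsmul ℚ (2 * m) y, key]
    exact L.add_mem (L.neg_mem (hsmulQ m z hw)) (hsmulQ (-t) r hrL)
  -- divisibility relations with D
  have hD2m : D ∣ 2 * m := hD.2.2 (2 * m) (by omega) h2m
  have hmD : m ∣ D := by
    have h1 : D • ((m : ℚ)⁻¹ • r) ∈ L := hD.2.1 _ hdual_rm
    have h2 : ((D : ℚ) * (m : ℚ)⁻¹) • r ∈ L := by
      rw [mul_smul, Int.cast_smul_eq_zsmul]; exact h1
    obtain ⟨k, hk⟩ := hprimQ _ h2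
    field_simp at hk
    refine ⟨k, ?_⟩
    have h3 : (D : ℚ) = ((m * k : ℤ) : ℚ) := by push_cast; linear_combination hk
    exact_mod_cast h3
  -- squeeze : D = m or D = 2m ; s = m or s = 2m
  have squeeze : ∀ x : ℤ, 0 < x → m ∣ x → x ∣ 2 * m → x = m ∨ x = 2 * m := by
    intro x hx hmx hx2m
    obtain ⟨k, hk⟩ := hmx
    obtain ⟨j, hj⟩ := hx2m
    have hmne : m ≠ 0 := hmpos.ne'
    have hkj : (2 : ℤ) = k * j := by
      rw [hk] at hj
      have h2 : m * 2 = m * (k * j) := by linear_combination hj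
      exact mul_left_cancel₀ hmne h2
    have hkpos : 0 < k := by nlinarith
    have hkle : k ≤ 2 := Int.le_of_dvd (by norm_num) ⟨j, hkj⟩
    interval_cases k
    · left; omega
    · right; omega
  -- exclude s = 2m in the case D = m
  rcases squeeze D hD.1 hmD hD2m with hDm | hD2
  · -- D = m
    have hsne : s ≠ 2 * m := by
      intro hs2
      have hdual2 : ((2 * (m : ℚ))⁻¹) • r ∈ DualSet B L := by
        intro l hl
        obtain ⟨a, ha⟩ := hs.2.1 l hl
        refine ⟨a, ?_⟩
        have h1 : B ((2 * (m : ℚ))⁻¹ • r) l = (2 * (m : ℚ))⁻¹ * B r l := by simp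
        rw [h1, ha, hs2]
        push_cast
        field_simp
      have h1 := hD.2.1 _ hdual2
      have h2 : ((D : ℚ) * (2 * (m : ℚ))⁻¹) • r ∈ L := by
        rw [mul_smul, Int.cast_smul_eq_zsmul]; exact h1
      have h3 : ((2 : ℚ)⁻¹) • r ∈ L := by
        have heq : (D : ℚ) * (2 * (m : ℚ))⁻¹ = (2 : ℚ)⁻¹ := by
          rw [hDm]; field_simp
        rwa [heq] at h2
      exact hhalf h3
    have hsm : s = m := by
      rcases squeeze s hs.1 hms hs2m with h | h
      · exact h
      · exact absurd h hsne
    have hodd : Odd m := by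
      rcases Int.even_or_odd m with hev | hodd
      · exfalso
        obtain ⟨m', hm'⟩ := hev
        have hm'pos : 0 < m' := by omega
        have hm'Q : (m' : ℚ) ≠ 0 := by exact_mod_cast hm'pos.ne'
        obtain ⟨y1, hy1, hy1v⟩ := exists_dual_pairing_one B L hlat r hprim hr0
        have hw := hstab y1 hy1
        rw [hrefl_neg y1] at hw
        have hcoef : 2 * B y1 r / B r r = -(1 / (m : ℚ)) := by
          rw [hy1v, hBrr]; field_simp
        rw [hcoef] at hw
        set z : V := (-(1 / (m : ℚ))) • r - y1 - y1 with hz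
        have hmy1 : (m : ℚ) • y1 ∈ L := by
          have h4 := hD.2.1 y1 hy1
          rw [hDm] at h4
          rwa [Int.cast_smul_eq_zsmul]
        have hmm : (m : ℚ) = (m' : ℚ) + (m' : ℚ) := by exact_mod_cast hm'
        have key : (2 : ℚ)⁻¹ • r = -((m' : ℚ) • z) - (m : ℚ) • y1 := by
          rw [hz, hmm]
          match_scalars <;> field_simp <;> ring
        have hfin : (2 : ℚ)⁻¹ • r ∈ L := by
          rw [key]
          exact L.sub_mem (L.neg_mem (hsmulQ m' z hw)) (hmm ▸ hmy1)
        exact hhalf hfin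
      · exact hodd
    left
    refine ⟨by rw [hBrr, hDm]; push_cast; ring, by omega, ?_⟩
    rw [hDm]
    exact hodd
  · -- D = 2m
    right
    refine ⟨by rw [hBrr, hD2]; push_cast; ring, ?_⟩
    rcases squeeze s hs.1 hms hs2m with h | h
    · right; omega
    · left; omega
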